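/- Fix the disc of radius 1/(2q) in ℂ and g_q(z) = ∏_{j=1}^q (1 − (jz)²)^⌊q/j⌋. Then |1/g_q(z)| ≤ e^{q/2} for all complex z with |z| ≤ 1/(2q). -/

import Mathlib

lemma aux9 (w : ℂ) (hw : ‖w‖ ≤ 1/2) : Real.exp (-(2 * ‖w‖^2)) ≤ ‖1 - w^2‖ := by
  have hw0 : 0 ≤ ‖w‖ := norm_nonneg w
  have ht : ‖w‖^2 ≤ 1/4 := by nlinarith
  have h1 : 1 - ‖w‖^2 ≤ ‖1 - w^2‖ := by
    calc 1 - ‖w‖^2 = ‖(1:ℂ)‖ - ‖w^2‖ := by simp [norm_pow]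
    _ ≤ ‖1 - w^2‖ := norm_sub_norm_le _ _
  refine le_trans ?_ h1
  set t := ‖w‖^2 with hts
  have ht0 : 0 ≤ t := sq_nonneg _
  have he : 1 + 2*t ≤ Real.exp (2*t) := by
    have := Real.add_one_le_exp (2*t); linarith
  have hinv : Real.exp (-(2*t)) * Real.exp (2*t) = 1 := by
    rw [← Real.exp_add]; simp
  have hpos : 0 < Real.exp (-(2*t)) := Real.exp_pos _
  nlinarith [mul_nonneg hpos.le (by linarith : (0:ℝ) ≤ Real.exp (2*t) - (1+2*t))]

/-- **Bound on `1/g_q` in the complex disc of radius `1/(2q)`.**  With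
`g_q(z) = ∏_{j=1}^q (1 - (jz)²)^⌊q/j⌋`, we have `|1/g_q(z)| ≤ e^{q/2}` for all complex
`z` with `|z| ≤ 1/(2q)`. -/
theorem stmt_9 (q : ℕ) (hq : 0 < q) (z : ℂ) (hz : ‖z‖ ≤ 1 / (2 * q)) :
    ‖(∏ j ∈ Finset.Icc 1 q, (1 - ((j : ℂ) * z) ^ 2) ^ (q / j))⁻¹‖ ≤
      Real.exp ((q : ℝ) / 2) := by
  have hq1 : (1:ℝ) ≤ q := by exact_mod_cast hq
  have hq0 : (0:ℝ) < q := by linarith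
  have hz0 : 0 ≤ ‖z‖ := norm_nonneg z
  have hz2 : ‖z‖^2 * (4*(q:ℝ)^2) ≤ 1 := by
    have h := mul_le_mul hz hz hz0 (by positivity)
    rw [div_mul_div_comm] at h
    have h2 : ‖z‖ * ‖z‖ * (2*(q:ℝ)*(2*(q:ℝ))) ≤ 1*1 := (le_div_iff₀ (by positivity)).mp h
    nlinarith
  -- sum bound
  have hsum : ∑ j ∈ Finset.Icc 1 q, (((q/j : ℕ):ℝ) * (2 * ((j:ℝ)*‖z‖)^2)) ≤ (q:ℝ)/2 := by
    have step : ∀ j ∈ Finset.Icc 1 q, ((q/j : ℕ):ℝ) * (2 * ((j:ℝ)*‖z‖)^2)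
        ≤ 2*(q:ℝ)*j*‖z‖^2 := by
      intro j hj
      have h1 : ((q/j : ℕ):ℝ) * j ≤ q := by exact_mod_cast Nat.div_mul_le_self q j
      have hj0 : (0:ℝ) ≤ j := Nat.cast_nonneg j
      have hd0 : (0:ℝ) ≤ ((q/j : ℕ):ℝ) := Nat.cast_nonneg _
      nlinarith [mul_le_mul_of_nonneg_right h1 (mul_nonneg hj0 (sq_nonneg ‖z‖))]
    calc ∑ j ∈ Finset.Icc 1 q, (((q/j : ℕ):ℝ) * (2 * ((j:ℝ)*‖z‖)^2))
        ≤ ∑ j ∈ Finset.Icc 1 q, 2*(q:ℝ)*j*‖z‖^2 := Finset.sum_le_sum step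
      _ ≤ ∑ j ∈ Finset.Icc 1 q, 2*(q:ℝ)*q*‖z‖^2 := by
          refine Finset.sum_le_sum fun j hj => ?_
          have hjq : (j:ℝ) ≤ q := by
            exact_mod_cast (Finset.mem_Icc.mp hj).2
          nlinarith [mul_nonneg (sub_nonneg.mpr hjq) (sq_nonneg ‖z‖), hq0.le]
      _ = (q:ℝ) * (2*(q:ℝ)*q*‖z‖^2) := by
          rw [Finset.sum_const, Nat.card_Icc]; simp [nsmul_eq_mul]
      _ ≤ (q:ℝ)/2 := by nlinarith
  -- product lower bound
  have hP : Real.exp (-((q:ℝ)/2)) ≤ ‖∏ j ∈ Finset.Icc 1 q, (1 - ((j : ℂ) * z) ^ 2) ^ (q / j)‖ := by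
    calc Real.exp (-((q:ℝ)/2))
        ≤ Real.exp (∑ j ∈ Finset.Icc 1 q, -(((q/j : ℕ):ℝ) * (2 * ((j:ℝ)*‖z‖)^2))) := by
          rw [Real.exp_le_exp, Finset.sum_neg_distrib, neg_le_neg_iff]
          exact hsum
      _ = ∏ j ∈ Finset.Icc 1 q, Real.exp (-(((q/j : ℕ):ℝ) * (2 * ((j:ℝ)*‖z‖)^2))) :=
          Real.exp_sum _ _
      _ ≤ ∏ j ∈ Finset.Icc 1 q, ‖(1 - ((j : ℂ) * z) ^ 2) ^ (q / j)‖ := by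
          refine Finset.prod_le_prod (fun _ _ => (Real.exp_pos _).le) fun j hj => ?_
          have hjq : (j:ℝ) ≤ q := by exact_mod_cast (Finset.mem_Icc.mp hj).2
          have hnw : ‖(j:ℂ)*z‖ = (j:ℝ)*‖z‖ := by
            rw [norm_mul, Complex.norm_natCast]
          have hw : ‖(j:ℂ)*z‖ ≤ 1/2 := by
            rw [hnw]
            calc (j:ℝ)*‖z‖ ≤ (q:ℝ) * (1/(2*q)) :=
              mul_le_mul hjq hz hz0 hq0.le
            _ = 1/2 := by field_simp
          have key := aux9 ((j:ℂ)*z) hw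
          rw [hnw] at key
          rw [norm_pow]
          calc Real.exp (-(((q/j : ℕ):ℝ) * (2 * ((j:ℝ)*‖z‖)^2)))
              = Real.exp (-(2 * ((j:ℝ)*‖z‖)^2)) ^ (q/j : ℕ) := by
                rw [← Real.exp_nat_mul]; congr 1; ring
            _ ≤ ‖1 - ((j:ℂ)*z)^2‖ ^ (q/j : ℕ) :=
                pow_le_pow_left₀ (Real.exp_pos _).le key _
      _ = ‖∏ j ∈ Finset.Icc 1 q, (1 - ((j : ℂ) * z) ^ 2) ^ (q / j)‖ :=
          (norm_prod _ _).symm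
  rw [norm_inv]
  rw [Real.exp_neg] at hP
  exact inv_le_of_inv_le₀ (Real.exp_pos _) hP
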